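/- Let a, b ≥ 0 and let f : ℝ³ → ℝ satisfy the local Lipschitz condition |f(y,z,u) − f(ỹ,z̃,ũ)| ≤ a·|y − ỹ| + ρ(max(|z|,|z̃|,|u|,|ũ|))·b·(|z − z̃| + |u − ũ|) for all (y,z,u), (ỹ,z̃,ũ) ∈ ℝ³. Let R, Q, P > 0, let b_R, b_Q, b_P, b_{2R} be truncations at the respective levels, and set Ĝ(𝐮) := b_P( ∫ g(b_{2R}(𝐮(x))) κ(x) ν(dx) ). Then for all y, y', z, z' ∈ ℝ and all 𝐮, 𝐮' ∈ L²(ν): |f(b_R(y), b_Q(z), Ĝ(𝐮)) − f(b_R(y'), b_Q(z'), Ĝ(𝐮'))| ≤ a·|y − y'| + ρ(max(Q,P))·(1 + ρ(2R)·‖κ‖)·b·(|z − z'| + ‖𝐮 − 𝐮'‖). -/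

import Mathlib

open MeasureTheory

/-- Product of two L² functions is integrable. -/
lemma mul_integrable_of_memL2 {ν : Measure ℝ} {v w : ℝ → ℝ}
    (hv : MemLp v 2 ν) (hw : MemLp w 2 ν) :
    Integrable (fun x => v x * w x) ν := by
  have h := L2.integrable_inner (𝕜 := ℝ) (hv.toLp v) (hw.toLp w)
  refine (integrable_congr ?_).mp h
  filter_upwards [hv.coeFn_toLp, hw.coeFn_toLp] with x hx hy
  simp [hx, hy, mul_comm]

/-- Cauchy–Schwarz for integrals of products of absolute values. -/
lemma abs_mul_integral_le_of_memL2 {ν : Measure ℝ} {v w : ℝ → ℝ}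
    (hv : MemLp v 2 ν) (hw : MemLp w 2 ν) :
    ∫ x, |v x| * |w x| ∂ν ≤ (eLpNorm v 2 ν).toReal * (eLpNorm w 2 ν).toReal := by
  have hpq : Real.HolderConjugate 2 2 := Real.holderConjugate_iff.mpr ⟨one_lt_two, by norm_num⟩
  have h2 : ENNReal.ofReal (2 : ℝ) = 2 := by norm_num
  have h := integral_mul_norm_le_Lp_mul_Lq hpq (h2 ▸ hv) (h2 ▸ hw)
  simp only [Real.norm_eq_abs] at h
  have hv2 := hv.eLpNorm_eq_integral_rpow_norm two_ne_zero ENNReal.ofNat_ne_top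
  have hw2 := hw.eLpNorm_eq_integral_rpow_norm two_ne_zero ENNReal.ofNat_ne_top
  simp only [ENNReal.toReal_ofNat, Real.norm_eq_abs] at hv2 hw2
  rw [hv2, hw2, ENNReal.toReal_ofReal (by positivity), ENNReal.toReal_ofReal (by positivity)]
  calc ∫ x, |v x| * |w x| ∂ν
      ≤ (∫ x, |v x| ^ (2:ℝ) ∂ν) ^ ((1:ℝ)/2) * (∫ x, |w x| ^ (2:ℝ) ∂ν) ^ ((1:ℝ)/2) := h
    _ = (∫ x, |v x| ^ (2:ℝ) ∂ν) ^ (2:ℝ)⁻¹ * (∫ x, |w x| ^ (2:ℝ) ∂ν) ^ (2:ℝ)⁻¹ := by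
        rw [one_div]

/-- The truncated generator `(y,z,𝐮) ↦ f(b_R y, b_Q z, Ĝ(𝐮))` is globally Lipschitz:
inequality (9) in the proof of Theorem 3.2. -/
theorem truncated_generator_lipschitz
    (ν : Measure ℝ) (hν0 : ν {0} = 0)
    (ρ : ℝ → ℝ) (hρ_nonneg : ∀ x : ℝ, 0 ≤ x → 0 ≤ ρ x)
    (hρ_mono : MonotoneOn ρ (Set.Ici (0 : ℝ))) (hρ_cont : ContinuousOn ρ (Set.Ici (0 : ℝ)))
    (g : ℝ → ℝ) (hg : Differentiable ℝ g) (hg0 : g 0 = 0)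
    (hg' : ∀ v : ℝ, |deriv g v| ≤ ρ |v|)
    (hκ : MemLp (fun x : ℝ => min 1 |x|) 2 ν)
    (a b : ℝ) (ha : 0 ≤ a) (hb : 0 ≤ b)
    (f : ℝ → ℝ → ℝ → ℝ)
    (hf : ∀ y z u y' z' u' : ℝ,
      |f y z u - f y' z' u'| ≤
        a * |y - y'| +
          ρ (max (max |z| |z'|) (max |u| |u'|)) * b * (|z - z'| + |u - u'|))
    (R Q P : ℝ) (hR : 0 < R) (hQ : 0 < Q) (hP : 0 < P)
    (bR bQ bP b2R : ℝ → ℝ)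
    (hbR0 : bR 0 = 0) (hbR_bd : ∀ x : ℝ, |bR x| ≤ min R |x|)
    (hbR_lip : ∀ x y : ℝ, |bR x - bR y| ≤ |x - y|)
    (hbQ0 : bQ 0 = 0) (hbQ_bd : ∀ x : ℝ, |bQ x| ≤ min Q |x|)
    (hbQ_lip : ∀ x y : ℝ, |bQ x - bQ y| ≤ |x - y|)
    (hbP0 : bP 0 = 0) (hbP_bd : ∀ x : ℝ, |bP x| ≤ min P |x|)
    (hbP_lip : ∀ x y : ℝ, |bP x - bP y| ≤ |x - y|)
    (hb2R0 : b2R 0 = 0) (hb2R_bd : ∀ x : ℝ, |b2R x| ≤ min (2 * R) |x|)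
    (hb2R_lip : ∀ x y : ℝ, |b2R x - b2R y| ≤ |x - y|) :
    ∀ (y y' z z' : ℝ) (u u' : ℝ → ℝ), MemLp u 2 ν → MemLp u' 2 ν →
      |f (bR y) (bQ z) (bP (∫ x, g (b2R (u x)) * min 1 |x| ∂ν)) -
          f (bR y') (bQ z') (bP (∫ x, g (b2R (u' x)) * min 1 |x| ∂ν))| ≤
        a * |y - y'| +
          ρ (max Q P) * (1 + ρ (2 * R) * (eLpNorm (fun x : ℝ => min 1 |x|) 2 ν).toReal) *
            b * (|z - z'| + (eLpNorm (fun x => u x - u' x) 2 ν).toReal) := by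
  intro y y' z z' u u' hu hu'
  set κ : ℝ → ℝ := fun x => min 1 |x| with hκdef
  have hκ_nonneg : ∀ x, 0 ≤ κ x := fun x => le_min zero_le_one (abs_nonneg x)
  set K : ℝ := (eLpNorm κ 2 ν).toReal with hKdef
  have hK0 : 0 ≤ K := ENNReal.toReal_nonneg
  have hρ2R : 0 ≤ ρ (2 * R) := hρ_nonneg _ (by linarith)
  -- Lipschitz estimate for g on [-2R, 2R]
  have hglip : ∀ v w : ℝ, |v| ≤ 2 * R → |w| ≤ 2 * R → |g v - g w| ≤ ρ (2 * R) * |v - w| := by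
    intro v w hv hw
    have hbound : ∀ x ∈ Set.Icc (-(2*R)) (2*R), ‖deriv g x‖ ≤ ρ (2 * R) := by
      intro x hx
      have hx2 : |x| ≤ 2 * R := abs_le.mpr ⟨hx.1, hx.2⟩
      rw [Real.norm_eq_abs]
      exact (hg' x).trans (hρ_mono (Set.mem_Ici.2 (abs_nonneg x))
        (Set.mem_Ici.2 (by linarith)) hx2)
    have := (convex_Icc (-(2*R)) (2*R)).norm_image_sub_le_of_norm_deriv_le
      (f := g) (fun x _ => hg.differentiableAt) hbound
      (Set.mem_Icc.mpr (abs_le.mp hw)) (Set.mem_Icc.mpr (abs_le.mp hv))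
    simpa [Real.norm_eq_abs] using this
  -- continuity of b2R
  have hb2R_cont : Continuous b2R := by
    have : LipschitzWith 1 b2R := LipschitzWith.of_dist_le_mul fun x y => by
      simpa [Real.dist_eq] using hb2R_lip x y
    exact this.continuous
  -- pointwise bound of the integrands
  have hg_pt : ∀ (v : ℝ → ℝ) (x : ℝ), |g (b2R (v x)) * κ x| ≤ ρ (2 * R) * (|v x| * |κ x|) := by
    intro v x
    have h1 : |b2R (v x)| ≤ 2 * R := (hb2R_bd (v x)).trans (min_le_left _ _)
    have h2 : |g (b2R (v x))| ≤ ρ (2 * R) * |b2R (v x)| := by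
      have := hglip (b2R (v x)) 0 h1 (by simpa using (by linarith : (0:ℝ) ≤ 2*R))
      simpa [hg0] using this
    have h3 : |b2R (v x)| ≤ |v x| := (hb2R_bd (v x)).trans (min_le_right _ _)
    rw [abs_mul]
    calc |g (b2R (v x))| * |κ x| ≤ (ρ (2*R) * |v x|) * |κ x| := by
          apply mul_le_mul_of_nonneg_right _ (abs_nonneg _)
          exact h2.trans (mul_le_mul_of_nonneg_left h3 hρ2R)
      _ = ρ (2 * R) * (|v x| * |κ x|) := by ring
  -- integrability
  have hint : ∀ (v : ℝ → ℝ), MemLp v 2 ν → Integrable (fun x => g (b2R (v x)) * κ x) ν := by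
    intro v hv
    have hmeas : AEStronglyMeasurable (fun x => g (b2R (v x)) * κ x) ν := by
      refine AEStronglyMeasurable.mul ?_ hκ.1
      exact (hg.continuous.comp hb2R_cont).comp_aestronglyMeasurable hv.1
    refine Integrable.mono ((mul_integrable_of_memL2 hv hκ).const_mul (ρ (2*R))) hmeas ?_
    filter_upwards with x
    have hnorm : ‖ρ (2*R) * (v x * κ x)‖ = ρ (2 * R) * (|v x| * |κ x|) := by
      rw [Real.norm_eq_abs, abs_mul, abs_mul, abs_of_nonneg hρ2R]
    rw [Real.norm_eq_abs, hnorm]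
    exact hg_pt v x
  have hiu := hint u hu
  have hiu' := hint u' hu'
  -- the key integral estimate
  set D : ℝ := (eLpNorm (fun x => u x - u' x) 2 ν).toReal with hDdef
  have hD0 : 0 ≤ D := ENNReal.toReal_nonneg
  have hGdiff : |(∫ x, g (b2R (u x)) * κ x ∂ν) - ∫ x, g (b2R (u' x)) * κ x ∂ν|
      ≤ ρ (2 * R) * K * D := by
    rw [← integral_sub hiu hiu']
    have huu' : MemLp (fun x => u x - u' x) 2 ν := hu.sub hu'
    calc |∫ x, (g (b2R (u x)) * κ x - g (b2R (u' x)) * κ x) ∂ν|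
        ≤ ∫ x, |g (b2R (u x)) * κ x - g (b2R (u' x)) * κ x| ∂ν := by
          simpa [Real.norm_eq_abs] using
            norm_integral_le_integral_norm (fun x => g (b2R (u x)) * κ x - g (b2R (u' x)) * κ x)
      _ ≤ ∫ x, ρ (2 * R) * |(u x - u' x) * κ x| ∂ν := by
          refine integral_mono (hiu.sub hiu').abs
            (((mul_integrable_of_memL2 huu' hκ).abs).const_mul (ρ (2*R))) ?_
          intro x
          simp only [Pi.abs_apply, abs_mul]
          have h1 : |b2R (u x)| ≤ 2 * R := (hb2R_bd _).trans (min_le_left _ _)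
          have h1' : |b2R (u' x)| ≤ 2 * R := (hb2R_bd _).trans (min_le_left _ _)
          calc |g (b2R (u x)) * κ x - g (b2R (u' x)) * κ x|
              = |g (b2R (u x)) - g (b2R (u' x))| * |κ x| := by
                rw [← sub_mul, abs_mul]
            _ ≤ (ρ (2*R) * |b2R (u x) - b2R (u' x)|) * |κ x| :=
                mul_le_mul_of_nonneg_right (hglip _ _ h1 h1') (abs_nonneg _)
            _ ≤ (ρ (2*R) * |u x - u' x|) * |κ x| :=
                mul_le_mul_of_nonneg_right
                  (mul_le_mul_of_nonneg_left (hb2R_lip _ _) hρ2R) (abs_nonneg _)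
            _ = ρ (2 * R) * (|u x - u' x| * |κ x|) := by ring
      _ = ρ (2 * R) * ∫ x, |u x - u' x| * |κ x| ∂ν := by
          rw [integral_const_mul]
          congr 1
          exact integral_congr_ae (Filter.Eventually.of_forall fun x => by simp [abs_mul])
      _ ≤ ρ (2 * R) * (D * K) := by
          exact mul_le_mul_of_nonneg_left (abs_mul_integral_le_of_memL2 huu' hκ) hρ2R
      _ = ρ (2 * R) * K * D := by ring
  -- put everything together
  set GU : ℝ := bP (∫ x, g (b2R (u x)) * κ x ∂ν) with hGU
  set GU' : ℝ := bP (∫ x, g (b2R (u' x)) * κ x ∂ν) with hGU'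
  have hGUd : |GU - GU'| ≤ ρ (2 * R) * K * D := (hbP_lip _ _).trans hGdiff
  have hmaxQP : (0:ℝ) ≤ max Q P := le_max_of_le_left hQ.le
  have hρQP : 0 ≤ ρ (max Q P) := hρ_nonneg _ hmaxQP
  have harg : max (max |bQ z| |bQ z'|) (max |GU| |GU'|) ≤ max Q P := by
    have h1 : |bQ z| ≤ Q := (hbQ_bd z).trans (min_le_left _ _)
    have h2 : |bQ z'| ≤ Q := (hbQ_bd z').trans (min_le_left _ _)
    have h3 : |GU| ≤ P := (hbP_bd _).trans (min_le_left _ _)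
    have h4 : |GU'| ≤ P := (hbP_bd _).trans (min_le_left _ _)
    exact max_le (max_le (h1.trans (le_max_left _ _)) (h2.trans (le_max_left _ _)))
      (max_le (h3.trans (le_max_right _ _)) (h4.trans (le_max_right _ _)))
  have harg0 : (0:ℝ) ≤ max (max |bQ z| |bQ z'|) (max |GU| |GU'|) :=
    le_max_of_le_left (le_max_of_le_left (abs_nonneg _))
  have hρle : ρ (max (max |bQ z| |bQ z'|) (max |GU| |GU'|)) ≤ ρ (max Q P) :=
    hρ_mono harg0 hmaxQP harg
  have hmain := hf (bR y) (bQ z) GU (bR y') (bQ z') GU'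
  refine hmain.trans ?_
  have hsum : |bQ z - bQ z'| + |GU - GU'| ≤ |z - z'| + ρ (2 * R) * K * D :=
    add_le_add (hbQ_lip z z') hGUd
  have hρarg0 : 0 ≤ ρ (max (max |bQ z| |bQ z'|) (max |GU| |GU'|)) := hρ_nonneg _ harg0
  have habs0 : (0:ℝ) ≤ |bQ z - bQ z'| + |GU - GU'| := by positivity
  have step1 : ρ (max (max |bQ z| |bQ z'|) (max |GU| |GU'|)) * b * (|bQ z - bQ z'| + |GU - GU'|)
      ≤ ρ (max Q P) * b * (|z - z'| + ρ (2 * R) * K * D) := by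
    apply mul_le_mul (mul_le_mul_of_nonneg_right hρle hb) hsum habs0 (by positivity)
  have step2 : ρ (max Q P) * b * (|z - z'| + ρ (2 * R) * K * D)
      ≤ ρ (max Q P) * (1 + ρ (2 * R) * K) * b * (|z - z'| + D) := by
    have hzz : (0:ℝ) ≤ |z - z'| := abs_nonneg _
    nlinarith [mul_nonneg hρ2R hK0, mul_nonneg (mul_nonneg hρQP hb) hzz,
      mul_nonneg (mul_nonneg (mul_nonneg hρQP hb) (mul_nonneg hρ2R hK0)) hzz,
      mul_nonneg (mul_nonneg hρQP hb) hD0]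
  have hy : a * |bR y - bR y'| ≤ a * |y - y'| :=
    mul_le_mul_of_nonneg_left (hbR_lip y y') ha
  linarith [step1.trans step2]
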